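/- Let A : ℝ → Matrix (Fin 2) (Fin 2) ℝ be continuous and functionally commutative, i.e. A(t')·A(t'') = A(t'')·A(t') for all t', t'' ∈ ℝ. Define X(t) = exp(∫₀ᵗ A(τ) dτ), the matrix exponential of the entrywise integral of A from 0 to t. Then X is differentiable and satisfies the matrix differential equation X'(t) = A(t)·X(t) for all t ∈ ℝ, with X(0) equal to the identity matrix; in particular, since exp of a matrix is invertible, X(t) is a fundamental matrix of solutions of the linear system Ẋ = A(t)X. -/

import Mathlib

open scoped Matrix

attribute [local instance] Matrix.linftyOpNormedAddCommGroup Matrix.linftyOpNormedRing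
  Matrix.linftyOpNormedSpace Matrix.linftyOpNormedAlgebra

noncomputable abbrev M2 := Matrix (Fin 2) (Fin 2) ℝ

lemma entry_norm_le (M : M2) (i j : Fin 2) : ‖M i j‖ ≤ ‖M‖ := by
  have h : ‖M i j‖₊ ≤ ‖M‖₊ := by
    rw [Matrix.linfty_opNNNorm_def]
    exact le_trans (Finset.single_le_sum (f := fun k => ‖M i k‖₊)
      (fun _ _ => zero_le) (Finset.mem_univ j))
      (Finset.le_sup (f := fun i => ∑ j : Fin 2, ‖M i j‖₊) (Finset.mem_univ i))
  exact_mod_cast h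

noncomputable def entryCLM (i j : Fin 2) : M2 →L[ℝ] ℝ :=
  LinearMap.mkContinuous
    { toFun := fun M => M i j
      map_add' := fun _ _ => rfl
      map_smul' := fun _ _ => rfl } 1
    (fun M => by show ‖M i j‖ ≤ 1 * ‖M‖; simpa using entry_norm_le M i j)

lemma entry_intervalIntegral (f : ℝ → M2) (hf : Continuous f) (a b : ℝ) (i j : Fin 2) :
    (∫ τ in a..b, f τ) i j = ∫ τ in a..b, f τ i j := by
  have := (entryCLM i j).intervalIntegral_comp_comm (μ := MeasureTheory.volume)
    (f := f) (a := a) (b := b) (hf.intervalIntegrable a b)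
  exact this.symm

lemma comm_integral (A : ℝ → M2) (hAcont : Continuous A)
    (hAcomm : ∀ t' t'' : ℝ, A t' * A t'' = A t'' * A t') (s t : ℝ) :
    A s * (∫ τ in (0:ℝ)..t, A τ) = (∫ τ in (0:ℝ)..t, A τ) * A s := by
  have h1 := (ContinuousLinearMap.mul ℝ M2 (A s)).intervalIntegral_comp_comm
    (hAcont.intervalIntegrable (μ := MeasureTheory.volume) 0 t)
  have h2 := ((ContinuousLinearMap.mul ℝ M2).flip (A s)).intervalIntegral_comp_comm
    (hAcont.intervalIntegrable (μ := MeasureTheory.volume) 0 t)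
  simp only [ContinuousLinearMap.mul_apply', ContinuousLinearMap.flip_apply] at h1 h2
  rw [← h1, ← h2]
  simp only [hAcomm]

lemma comm_integral_integral (A : ℝ → M2) (hAcont : Continuous A)
    (hAcomm : ∀ t' t'' : ℝ, A t' * A t'' = A t'' * A t') (s t : ℝ) :
    Commute (∫ τ in (0:ℝ)..s, A τ) (∫ τ in (0:ℝ)..t, A τ) := by
  have h1 := ((ContinuousLinearMap.mul ℝ M2).flip (∫ τ in (0:ℝ)..t, A τ)).intervalIntegral_comp_comm
    (hAcont.intervalIntegrable (μ := MeasureTheory.volume) 0 s)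
  have h2 := (ContinuousLinearMap.mul ℝ M2 (∫ τ in (0:ℝ)..t, A τ)).intervalIntegral_comp_comm
    (hAcont.intervalIntegrable (μ := MeasureTheory.volume) 0 s)
  simp only [ContinuousLinearMap.mul_apply', ContinuousLinearMap.flip_apply] at h1 h2
  unfold Commute SemiconjBy
  rw [← h1, ← h2]
  congr 1
  ext τ : 1
  exact comm_integral A hAcont hAcomm τ t

/-- If `A : ℝ → Matrix (Fin 2) (Fin 2) ℝ` is continuous and functionally
commutative, then `X(t) = exp (∫₀ᵗ A(τ) dτ)` (entrywise integral, matrix exponential) is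
differentiable with `X'(t) = A(t) * X(t)`, satisfies `X(0) = 1`, and each `X(t)` is
invertible, so `X` is a fundamental matrix of the system `Ẋ = A(t)X`. -/
theorem fundamental_matrix_of_functionally_commutative
    (A : ℝ → Matrix (Fin 2) (Fin 2) ℝ)
    (hAcont : Continuous A)
    (hAcomm : ∀ t' t'' : ℝ, A t' * A t'' = A t'' * A t')
    (X : ℝ → Matrix (Fin 2) (Fin 2) ℝ)
    (hX : ∀ t : ℝ, X t =
      NormedSpace.exp (Matrix.of fun i j => ∫ τ in (0 : ℝ)..t, A τ i j)) :
    (∀ t : ℝ, HasDerivAt X (A t * X t) t) ∧ X 0 = 1 ∧ ∀ t : ℝ, IsUnit (X t) := by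
  set B : ℝ → M2 := fun t => ∫ τ in (0:ℝ)..t, A τ with hB
  have hBof : ∀ t : ℝ, (Matrix.of fun i j => ∫ τ in (0 : ℝ)..t, A τ i j) = B t := by
    intro t
    ext i j
    exact (entry_intervalIntegral A hAcont 0 t i j).symm
  have hXB : ∀ t : ℝ, X t = NormedSpace.exp (B t) := fun t => by rw [hX t, hBof t]
  have hBderiv : ∀ s : ℝ, HasDerivAt B (A s) s := fun s =>
    (hAcont.integral_hasStrictDerivAt 0 s).hasDerivAt
  refine ⟨?_, ?_, ?_⟩
  · intro t
    have h1 : HasDerivAt (fun s => B s - B t) (A t) t := (hBderiv t).sub_const _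
    have h2 : HasFDerivAt (NormedSpace.exp) (1 : M2 →L[ℝ] M2) (B t - B t) := by
      rw [sub_self]; exact hasFDerivAt_exp_zero
    have h3 : HasDerivAt (fun s => NormedSpace.exp (B s - B t)) (A t) t := by
      have h5 := h2.comp_hasDerivAt t h1
      exact h5
    have h4 : HasDerivAt (fun s => NormedSpace.exp (B s - B t) * NormedSpace.exp (B t))
        (A t * NormedSpace.exp (B t)) t := h3.mul_const _
    have heq : ∀ s : ℝ, X s = NormedSpace.exp (B s - B t) * NormedSpace.exp (B t) := by
      intro s
      rw [hXB s]
      have h6 := NormedSpace.exp_add_of_commute (x := B s - B t) (y := B t)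
        ((comm_integral_integral A hAcont hAcomm s t).sub_left (Commute.refl (B t)))
      rw [sub_add_cancel] at h6
      exact h6
    rw [hXB t]
    exact h4.congr_of_eventuallyEq (Filter.Eventually.of_forall heq)
  · rw [hX 0]
    have : (Matrix.of fun i j => ∫ τ in (0:ℝ)..(0:ℝ), A τ i j) = (0 : M2) := by
      ext i j; simp
    rw [this, NormedSpace.exp_zero]
  · intro t
    rw [hX t]
    exact NormedSpace.isUnit_exp _
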